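/- Let G be a group, P a submonoid of G, and for p ∈ P let L_p be the isometry of ℓ²(P) determined by L_p δ_q = δ_{pq}. Then for every n ≥ 1 and all finitely supported functions c⁽¹⁾, …, c⁽ⁿ⁾ : P → ℂ one has Σ_{i=1}^{n} Σ_{p} |c⁽ⁱ⁾_p|² ≤ ‖Σ_{i=1}^{n} (Σ_{p} c⁽ⁱ⁾_p L_p)† (Σ_{q} c⁽ⁱ⁾_q L_q)‖_{B(ℓ²(P))}. -/

import Mathlib

open scoped ComplexConjugate InnerProductSpace

/-- Let `G` be a group, `P` a submonoid of `G`, and `L_p` the isometry of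
`ℓ²(P)` determined by `L_p δ_q = δ_{pq}`.  Then for every `n ≥ 1` and all finitely supported
functions `c⁽¹⁾, …, c⁽ⁿ⁾ : P → ℂ`,
`Σᵢ Σ_p |c⁽ⁱ⁾_p|² ≤ ‖Σᵢ (Σ_p c⁽ⁱ⁾_p L_p)† (Σ_q c⁽ⁱ⁾_q L_q)‖`. -/
theorem stmt_11 {G : Type*} [Group G] [DecidableEq G] (P : Submonoid G)
    (L : P → (lp (fun _ : P => ℂ) 2 →L[ℂ] lp (fun _ : P => ℂ) 2))
    (hL : ∀ p q : P, L p (lp.single 2 q 1) = lp.single 2 (p * q) 1)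
    (n : ℕ) (hn : 1 ≤ n) (c : Fin n → (P →₀ ℂ)) :
    ∑ i : Fin n, ∑ p ∈ (c i).support, ‖c i p‖ ^ 2 ≤
      ‖∑ i : Fin n,
        ContinuousLinearMap.adjoint (∑ p ∈ (c i).support, c i p • L p) *
          (∑ q ∈ (c i).support, c i q • L q)‖ := by
  classical
  set H := lp (fun _ : P => ℂ) 2
  set e : H := lp.single 2 (1 : P) (1 : ℂ) with he
  set A : Fin n → (H →L[ℂ] H) := fun i => ∑ p ∈ (c i).support, c i p • L p with hA
  set T : H →L[ℂ] H := ∑ i : Fin n, ContinuousLinearMap.adjoint (A i) * (A i) with hT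
  have horth : Orthonormal ℂ (fun p : P => (lp.single 2 p (1 : ℂ) : H)) := by
    rw [orthonormal_iff_ite]
    intro p q
    rw [lp.inner_single_left, lp.single_apply]
    by_cases h : p = q
    · simp [h]
    · simp [h, Ne.symm h]
  have hAe : ∀ i, A i e = ∑ p ∈ (c i).support, c i p • (lp.single 2 p (1 : ℂ) : H) := by
    intro i
    rw [hA]
    simp only [ContinuousLinearMap.sum_apply, ContinuousLinearMap.smul_apply]
    refine Finset.sum_congr rfl fun p _ => ?_
    rw [he, hL p 1, mul_one]
  have hnormsq : ∀ i, (⟪A i e, A i e⟫_ℂ) = ∑ p ∈ (c i).support, (‖c i p‖ : ℂ) ^ 2 := by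
    intro i
    rw [hAe i, horth.inner_sum]
    exact Finset.sum_congr rfl fun p _ => RCLike.conj_mul _
  have hkey : (⟪e, T e⟫_ℂ) = ∑ i : Fin n, ∑ p ∈ (c i).support, (‖c i p‖ : ℂ) ^ 2 := by
    rw [hT]
    simp only [ContinuousLinearMap.sum_apply, inner_sum, ContinuousLinearMap.mul_apply,
      ContinuousLinearMap.adjoint_inner_right]
    erw [inner_sum]
    simp only [ContinuousLinearMap.adjoint_inner_right]
    exact Finset.sum_congr rfl fun i _ => hnormsq i
  have hne : ‖e‖ = 1 := horth.1 (1 : P)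
  calc ∑ i : Fin n, ∑ p ∈ (c i).support, ‖c i p‖ ^ 2
      = Complex.re (⟪e, T e⟫_ℂ) := by
        rw [hkey]; simp [← Complex.ofReal_pow]
    _ ≤ ‖(⟪e, T e⟫_ℂ)‖ := Complex.re_le_norm _
    _ ≤ ‖e‖ * ‖T e‖ := norm_inner_le_norm e (T e)
    _ ≤ ‖e‖ * (‖T‖ * ‖e‖) := by
        gcongr
        exact T.le_opNorm e
    _ = ‖T‖ := by rw [hne]; ring
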